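/- Let p, q be distinct points in the plane, β > 1, and suppose both disks of radius (β/2)·|pq| that pass through p and q have interiors disjoint from a finite point set P ⊇ {p,q} (minus {p,q}). Let θ = arccos(1/β). Then p sees the Voronoi edge e_pq (in the Euclidean Voronoi diagram of P) at an angle of at least 2θ. In particular, if β ≥ 1 + α² for suitable small α > 0 (so that arccos(1/β) ≥ α/2), then pq is an α-stable Delaunay edge. -/

import Mathlib

open Real EuclideanGeometry
open scoped RealInnerProductSpace

abbrev E2 := EuclideanSpace ℝ (Fin 2)

lemma inner_coords (x y : E2) : ⟪x, y⟫ = x 0 * y 0 + x 1 * y 1 := by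
  simp [PiLp.inner_apply, Fin.sum_univ_two, RCLike.inner_apply, conj_trivial]; ring

lemma norm_sq_coords (x : E2) : ‖x‖^2 = (x 0)^2 + (x 1)^2 := by
  rw [← real_inner_self_eq_norm_sq, inner_coords]; ring

lemma key_alg (a0 a1 b0 b1 v0 v1 R : ℝ)
    (ha : a0^2+a1^2 = R^2) (hb : b0^2+b1^2 = R^2)
    (hav : (a0-v0)^2+(a1-v1)^2 = R^2) (hbv : (b0-v0)^2+(b1-v1)^2 = R^2)
    (hv : v0^2+v1^2 ≠ 0) (hab : ¬(a0 = b0 ∧ a1 = b1)) :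
    a0*b0+a1*b1 = (v0^2+v1^2)/2 - R^2 := by
  have hA : 2*(a0*v0+a1*v1) = v0^2+v1^2 := by linear_combination ha - hav
  have hB : 2*(b0*v0+b1*v1) = v0^2+v1^2 := by linear_combination hb - hbv
  set c := (a0-v0/2)*(b1-v1/2) - (a1-v1/2)*(b0-v0/2) with hcdef
  have hvc : (v0^2+v1^2) * c = 0 := by
    rw [hcdef]
    linear_combination (v0*(b1-v1/2)/2 - v1*(b0-v0/2)/2) * hA +
      (-v0*(a1-v1/2)/2 + v1*(a0-v0/2)/2) * hB
  have hc0 : c = 0 := by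
    rcases mul_eq_zero.mp hvc with h | h
    · exact absurd h hv
    · exact h
  have hN1 : (a0-v0/2)^2+(a1-v1/2)^2 = R^2 - (v0^2+v1^2)/4 := by
    linear_combination ha - hA/2
  have hN2 : (b0-v0/2)^2+(b1-v1/2)^2 = R^2 - (v0^2+v1^2)/4 := by
    linear_combination hb - hB/2
  set dt := (a0-v0/2)*(b0-v0/2) + (a1-v1/2)*(b1-v1/2) with hdt
  have hsq : dt^2 = (R^2 - (v0^2+v1^2)/4)^2 := by
    have lag : dt^2 + c^2 = ((a0-v0/2)^2+(a1-v1/2)^2) * ((b0-v0/2)^2+(b1-v1/2)^2) := by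
      rw [hdt, hcdef]; ring
    rw [hN1, hN2] at lag
    linear_combination lag - c * hc0
  have hfac : (dt - (R^2 - (v0^2+v1^2)/4)) * (dt + (R^2 - (v0^2+v1^2)/4)) = 0 := by
    linear_combination hsq
  rcases mul_eq_zero.mp hfac with h | h
  · exfalso
    have heq : (a0-b0)^2 + (a1-b1)^2 = 0 := by
      linear_combination hN1 + hN2 - 2*h
    have t1 := sq_nonneg (a0-b0)
    have t2 := sq_nonneg (a1-b1)
    have h1 : (a0-b0)^2 = 0 := by linarith
    have h2 : (a1-b1)^2 = 0 := by linarith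
    exact hab ⟨sub_eq_zero.mp (pow_eq_zero_iff two_ne_zero |>.mp h1),
      sub_eq_zero.mp (pow_eq_zero_iff two_ne_zero |>.mp h2)⟩
  · linear_combination h + hA/4 + hB/4

lemma arccos_double (β : ℝ) (hβ : 1 < β) :
    Real.arccos (2/β^2 - 1) = 2 * Real.arccos (1/β) := by
  have hβ0 : (0:ℝ) < β := by linarith
  have h0 : (0:ℝ) ≤ 1/β := by positivity
  have h1 : 1/β ≤ 1 := by rw [div_le_one hβ0]; linarith
  have hcos : Real.cos (2 * Real.arccos (1/β)) = 2/β^2 - 1 := by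
    rw [Real.cos_two_mul, Real.cos_arccos (by linarith) h1]
    field_simp
  rw [← hcos, Real.arccos_cos]
  · linarith [Real.arccos_nonneg (1/β)]
  · have := Real.arccos_le_pi_div_two (x := 1/β) |>.mpr h0
    linarith [Real.pi_pos]

theorem beta_skeleton_edge_is_stable (P : Finset E2) (p q c₁ c₂ : E2) (β : ℝ)
    (hp : p ∈ P) (hq : q ∈ P) (hpq : p ≠ q) (hβ : 1 < β)
    (hc₁p : dist c₁ p = β / 2 * dist p q) (hc₁q : dist c₁ q = β / 2 * dist p q)
    (hc₂p : dist c₂ p = β / 2 * dist p q) (hc₂q : dist c₂ q = β / 2 * dist p q)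
    (hcc : c₁ ≠ c₂)
    (hempty₁ : ∀ r ∈ P, r ≠ p → r ≠ q → β / 2 * dist p q ≤ dist c₁ r)
    (hempty₂ : ∀ r ∈ P, r ≠ p → r ≠ q → β / 2 * dist p q ≤ dist c₂ r) :
    (∀ r ∈ P, dist c₁ p ≤ dist c₁ r) ∧ (∀ r ∈ P, dist c₂ p ≤ dist c₂ r) ∧
    2 * Real.arccos (1 / β) ≤ ∠ c₁ p c₂ ∧
    (∀ α : ℝ, 0 < α → α / 2 ≤ Real.arccos (1 / β) → α ≤ ∠ c₁ p c₂) := by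
  have hβ0 : (0:ℝ) < β := by linarith
  have hd : 0 < dist p q := dist_pos.mpr hpq
  set d := dist p q with hddef
  set R := β / 2 * d with hRdef
  have hR : 0 < R := by positivity
  refine ⟨?_, ?_, ?_, ?_⟩
  · intro r hr
    by_cases h1 : r = p
    · subst h1; exact le_refl _
    by_cases h2 : r = q
    · subst h2; rw [hc₁p, hc₁q]
    · rw [hc₁p]; exact hempty₁ r hr h1 h2
  · intro r hr
    by_cases h1 : r = p
    · subst h1; exact le_refl _
    by_cases h2 : r = q
    · subst h2; rw [hc₂p, hc₂q]
    · rw [hc₂p]; exact hempty₂ r hr h1 h2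
  all_goals {
    have hangle : ∠ c₁ p c₂ = 2 * Real.arccos (1 / β) := by
      set a := c₁ - p with hadef
      set b := c₂ - p with hbdef
      set v := q - p with hvdef
      have hna : ‖a‖ = R := by rw [hadef, ← dist_eq_norm]; exact hc₁p
      have hnb : ‖b‖ = R := by rw [hbdef, ← dist_eq_norm]; exact hc₂p
      have hnav : ‖a - v‖ = R := by
        rw [hadef, hvdef, show c₁ - p - (q - p) = c₁ - q by abel, ← dist_eq_norm]
        exact hc₁q
      have hnbv : ‖b - v‖ = R := by
        rw [hbdef, hvdef, show c₂ - p - (q - p) = c₂ - q by abel, ← dist_eq_norm]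
        exact hc₂q
      have hnv : ‖v‖ = d := by rw [hvdef, ← dist_eq_norm, dist_comm]
      have hd2 : (v 0)^2 + (v 1)^2 = d^2 := by rw [← norm_sq_coords, hnv]
      have key : a 0 * b 0 + a 1 * b 1 = ((v 0)^2+(v 1)^2)/2 - R^2 := by
        apply key_alg
        · rw [← norm_sq_coords, hna]
        · rw [← norm_sq_coords, hnb]
        · have : (a 0 - v 0)^2 + (a 1 - v 1)^2 = ‖a - v‖^2 := by
            rw [norm_sq_coords]; simp
          rw [this, hnav]
        · have : (b 0 - v 0)^2 + (b 1 - v 1)^2 = ‖b - v‖^2 := by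
            rw [norm_sq_coords]; simp
          rw [this, hnbv]
        · rw [hd2]; positivity
        · rintro ⟨h0, h1⟩
          apply hcc
          have hab : a = b := by
            ext i
            fin_cases i
            · exact h0
            · exact h1
          rw [hadef, hbdef] at hab
          have h' := congrArg (fun x : E2 => x + p) hab
          simpa using h'
      have hinner : ⟪a, b⟫ = d^2/2 - R^2 := by
        rw [inner_coords, key, hd2]
      have : ∠ c₁ p c₂ = Real.arccos (⟪a, b⟫ / (‖a‖ * ‖b‖)) := by
        simp only [EuclideanGeometry.angle, vsub_eq_sub]
        rfl
      rw [this, hinner, hna, hnb]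
      have hratio : (d^2/2 - R^2) / (R * R) = 2/β^2 - 1 := by
        rw [hRdef]
        field_simp
      rw [hratio, arccos_double β hβ]
    first
    | exact le_of_eq hangle.symm
    | { intro α hα hα2
        rw [hangle]; linarith }
  }
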